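/- For every integer d ≥ 2 there are infinitely many d-degenerate graphs H with α_d(H) < flap_d(H). Concretely: let X, Y, Z be disjoint sets where H[Z] = K_{d+1}, Y is a stable set of size d, each vertex of Y is adjacent to exactly d vertices of Z with every vertex of Z adjacent to at least one vertex of Y, X is a nonempty stable set, and every vertex of X has neighborhood exactly Y. Then H is d-degenerate, α_d(H) = |X|, and flap_d(H) ≥ |X| + 1. -/

import Mathlib

def IsSeparation {V : Type} (G : SimpleGraph V) (p : Set V × Set V) : Prop :=
  p.1 ∪ p.2 = Set.univ ∧ ∀ a ∈ p.1 \ p.2, ∀ b ∈ p.2 \ p.1, ¬ G.Adj a b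

def IsIndepCollection {V : Type} (G : SimpleGraph V) (C : Set (Set V × Set V)) : Prop :=
  (∀ p ∈ C, IsSeparation G p ∧ (p.1 \ p.2).Nonempty) ∧
  ∀ p ∈ C, ∀ q ∈ C, p ≠ q → p.1 ⊆ q.2 ∧ q.1 ⊆ p.2

def Degenerate {V : Type} (d : ℕ) (G : SimpleGraph V) : Prop :=
  ∀ s : Set V, s.Nonempty → ∃ v ∈ s, (G.neighborSet v ∩ s).ncard ≤ d

/-- `α_d(H)`: the maximum size of a set of pairwise non-adjacent vertices of degree at
most `d` in `H`. -/
noncomputable def alphaD {V : Type} (d : ℕ) (H : SimpleGraph V) : ℕ :=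
  sSup {n | ∃ s : Set V, s.Pairwise (fun u v => ¬ H.Adj u v) ∧
      (∀ v ∈ s, (H.neighborSet v).ncard ≤ d) ∧ s.ncard = n}

/-- `flap_d(H)`: the maximum size of an independent collection of separations of `H`,
each of order at most `d`. -/
noncomputable def flapD {V : Type} (d : ℕ) (H : SimpleGraph V) : ℕ :=
  sSup {n | ∃ C : Set (Set V × Set V), IsIndepCollection H C ∧
      (∀ p ∈ C, (p.1 ∩ p.2).ncard ≤ d) ∧ C.ncard = n}

/-- For `d ≥ 2`, the following concrete graphs `H` witness `α_d(H) < flap_d(H)`: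
`V(H)` is partitioned into `X`, `Y`, `Z` where `H[Z] = K_{d+1}`, `Y` is a stable set of size
`d`, each vertex of `Y` is adjacent to exactly `d` vertices of `Z` with every vertex of `Z`
adjacent to at least one vertex of `Y`, `X` is a nonempty stable set, and every vertex of `X`
has neighborhood exactly `Y`.  Then `H` is `d`-degenerate, `α_d(H) = |X|`, and
`flap_d(H) ≥ |X| + 1`. -/
theorem stmt5 {V : Type} [Fintype V] (d : ℕ) (hd : 2 ≤ d) (H : SimpleGraph V)
    (X Y Z : Set V)
    (hcover : X ∪ Y ∪ Z = Set.univ)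
    (hXY : Disjoint X Y) (hXZ : Disjoint X Z) (hYZ : Disjoint Y Z)
    (hZcard : Z.ncard = d + 1)
    (hZclique : ∀ u ∈ Z, ∀ v ∈ Z, u ≠ v → H.Adj u v)
    (hYcard : Y.ncard = d)
    (hYstable : Y.Pairwise fun u v => ¬ H.Adj u v)
    (hYZdeg : ∀ y ∈ Y, (H.neighborSet y ∩ Z).ncard = d)
    (hZcov : ∀ z ∈ Z, ∃ y ∈ Y, H.Adj y z)
    (hXne : X.Nonempty)
    (hXstable : X.Pairwise fun u v => ¬ H.Adj u v)
    (hXnbr : ∀ x ∈ X, H.neighborSet x = Y) :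
    Degenerate d H ∧ alphaD d H = X.ncard ∧ X.ncard + 1 ≤ flapD d H := by

  classical
  -- basic membership facts
  have finV : ∀ s : Set V, s.Finite := fun s => s.toFinite
  have hadjX : ∀ x ∈ X, ∀ v : V, H.Adj x v ↔ v ∈ Y := by
    intro x hx v
    rw [← hXnbr x hx, SimpleGraph.mem_neighborSet]
  have hXY' : ∀ a ∈ X, a ∉ Y := fun a ha => Set.disjoint_left.mp hXY ha
  have hXZ' : ∀ a ∈ X, a ∉ Z := fun a ha => Set.disjoint_left.mp hXZ ha
  have hYZ' : ∀ a ∈ Y, a ∉ Z := fun a ha => Set.disjoint_left.mp hYZ ha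
  have hmem : ∀ v : V, v ∈ X ∨ v ∈ Y ∨ v ∈ Z := by
    intro v
    have : v ∈ X ∪ Y ∪ Z := hcover ▸ Set.mem_univ v
    simpa [Set.mem_union, or_assoc] using this
  -- degree lower bounds
  have hYdeg : ∀ y ∈ Y, d < (H.neighborSet y).ncard := by
    intro y hy
    have hsub : X ∪ (H.neighborSet y ∩ Z) ⊆ H.neighborSet y := by
      rintro v (hv | hv)
      · exact ((hadjX v hv y).mpr hy).symm
      · exact hv.1
    have hdisj : Disjoint X (H.neighborSet y ∩ Z) :=
      hXZ.mono_right Set.inter_subset_right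
    have hXpos : 0 < X.ncard := (Set.ncard_pos (finV X)).mpr hXne
    have h1 : (X ∪ (H.neighborSet y ∩ Z)).ncard = X.ncard + d := by
      rw [Set.ncard_union_eq hdisj (finV _) (finV _), hYZdeg y hy]
    have h2 : (X ∪ (H.neighborSet y ∩ Z)).ncard ≤ (H.neighborSet y).ncard :=
      Set.ncard_le_ncard hsub (finV _)
    omega
  have hZdeg : ∀ z ∈ Z, d < (H.neighborSet z).ncard := by
    intro z hz
    obtain ⟨y0, hy0Y, hy0adj⟩ := hZcov z hz
    have hy0notZ : y0 ∉ Z \ {z} := fun h => hYZ' y0 hy0Y h.1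
    have hsub : insert y0 (Z \ {z}) ⊆ H.neighborSet z := by
      rintro v (rfl | ⟨hvZ, hvz⟩)
      · exact hy0adj.symm
      · exact hZclique z hz v hvZ (fun h => hvz (h ▸ rfl))
    have h1 : (insert y0 (Z \ {z})).ncard = d + 1 := by
      rw [Set.ncard_insert_of_notMem hy0notZ (finV _),
          Set.ncard_diff_singleton_of_mem hz, hZcard]
      omega
    have h2 : (insert y0 (Z \ {z})).ncard ≤ (H.neighborSet z).ncard :=
      Set.ncard_le_ncard hsub (finV _)
    omega
  refine ⟨?_, ?_, ?_⟩
  · -- Degenerate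
    intro s hs
    by_cases hX : (s ∩ X).Nonempty
    · obtain ⟨x, hxs, hxX⟩ := hX
      refine ⟨x, hxs, ?_⟩
      calc (H.neighborSet x ∩ s).ncard ≤ (H.neighborSet x).ncard :=
            Set.ncard_le_ncard Set.inter_subset_left (finV _)
        _ = d := by rw [hXnbr x hxX, hYcard]
    · by_cases hY : (s ∩ Y).Nonempty
      · obtain ⟨y, hys, hyY⟩ := hY
        refine ⟨y, hys, ?_⟩
        have hsub : H.neighborSet y ∩ s ⊆ H.neighborSet y ∩ Z := by
          rintro v ⟨hvN, hvs⟩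
          refine ⟨hvN, ?_⟩
          rcases hmem v with hv | hv | hv
          · exact absurd ⟨v, hvs, hv⟩ hX
          · exact absurd hvN (hYstable hyY hv (fun h => (H.irrefl (h ▸ hvN))))
          · exact hv
        calc (H.neighborSet y ∩ s).ncard ≤ (H.neighborSet y ∩ Z).ncard :=
              Set.ncard_le_ncard hsub (finV _)
          _ = d := hYZdeg y hyY
      · obtain ⟨z, hzs⟩ := hs
        have hzZ : z ∈ Z := by
          rcases hmem z with h | h | h
          · exact absurd ⟨z, hzs, h⟩ hX
          · exact absurd ⟨z, hzs, h⟩ hY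
          · exact h
        refine ⟨z, hzs, ?_⟩
        have hsub : H.neighborSet z ∩ s ⊆ Z \ {z} := by
          rintro v ⟨hvN, hvs⟩
          have hvZ : v ∈ Z := by
            rcases hmem v with h | h | h
            · exact absurd ⟨v, hvs, h⟩ hX
            · exact absurd ⟨v, hvs, h⟩ hY
            · exact h
          exact ⟨hvZ, fun h => H.irrefl ((Set.mem_singleton_iff.mp h) ▸ hvN)⟩
        calc (H.neighborSet z ∩ s).ncard ≤ (Z \ {z}).ncard :=
              Set.ncard_le_ncard hsub (finV _)
          _ = d := by rw [Set.ncard_diff_singleton_of_mem hzZ, hZcard]; omega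
  · -- alphaD = X.ncard
    have hXmem : X.ncard ∈ {n | ∃ s : Set V, s.Pairwise (fun u v => ¬ H.Adj u v) ∧
        (∀ v ∈ s, (H.neighborSet v).ncard ≤ d) ∧ s.ncard = n} :=
      ⟨X, hXstable, fun v hv => by rw [hXnbr v hv, hYcard], rfl⟩
    apply le_antisymm
    · apply csSup_le ⟨X.ncard, hXmem⟩
      rintro n ⟨s, hst, hdeg, rfl⟩
      apply Set.ncard_le_ncard _ (finV X)
      intro v hv
      rcases hmem v with h | h | h
      · exact h
      · exact absurd (hdeg v hv) (hYdeg v h).not_ge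
      · exact absurd (hdeg v hv) (hZdeg v h).not_ge
    · apply le_csSup _ hXmem
      refine ⟨(Set.univ : Set V).ncard, ?_⟩
      rintro n ⟨s, -, -, rfl⟩
      exact Set.ncard_le_ncard (Set.subset_univ s) (finV _)
  · -- flapD
    set f : V → Set V × Set V := fun x => ({x} ∪ Y, {x}ᶜ) with hf
    set q0 : Set V × Set V := (Z ∪ Y, X ∪ Y) with hq0
    set C : Set (Set V × Set V) := f '' X ∪ {q0} with hC
    have hZne : Z.Nonempty := by
      apply Set.nonempty_of_ncard_ne_zero; omega
    have hq0notim : q0 ∉ f '' X := by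
      rintro ⟨x, hx, heq⟩
      have h2 : ({x}ᶜ : Set V) = X ∪ Y := congrArg Prod.snd heq
      have : x ∈ ({x}ᶜ : Set V) := h2 ▸ (Set.mem_union_left Y hx)
      exact this rfl
    have hinj : Set.InjOn f X := by
      intro x hx x' hx' heq
      have h1 : ({x} ∪ Y : Set V) = {x'} ∪ Y := congrArg Prod.fst heq
      have : x ∈ ({x'} ∪ Y : Set V) := h1 ▸ (Set.mem_union_left Y rfl)
      rcases this with h | h
      · exact h
      · exact absurd h (hXY' x hx)
    have hCcard : C.ncard = X.ncard + 1 := by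
      rw [hC, Set.union_singleton, Set.ncard_insert_of_notMem hq0notim (Set.toFinite _),
          Set.ncard_image_of_injOn hinj]
    have hsep1 : ∀ x ∈ X, IsSeparation H (f x) ∧ ((f x).1 \ (f x).2).Nonempty := by
      intro x hx
      refine ⟨⟨?_, ?_⟩, ⟨x, Or.inl rfl, fun h => h rfl⟩⟩
      · ext v; simp only [hf, Set.mem_union, Set.mem_singleton_iff, Set.mem_compl_iff,
          Set.mem_univ, iff_true]
        by_cases h : v = x
        · exact Or.inl (Or.inl h)
        · exact Or.inr h
      · rintro a ⟨haA, haB⟩ b ⟨hbB, hbA⟩ hadj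
        have hax : a = x := by
          simpa [hf] using haB
        subst hax
        exact hbA (Or.inr ((hadjX a hx b).mp hadj))
    have hsep2 : IsSeparation H q0 ∧ (q0.1 \ q0.2).Nonempty := by
      obtain ⟨z0, hz0⟩ := hZne
      refine ⟨⟨?_, ?_⟩, ⟨z0, Or.inl hz0, ?_⟩⟩
      · ext v; simp only [hq0, Set.mem_union, Set.mem_univ, iff_true]
        rcases hmem v with h | h | h
        · exact Or.inr (Or.inl h)
        · exact Or.inl (Or.inr h)
        · exact Or.inl (Or.inl h)
      · rintro a ⟨haA, haB⟩ b ⟨hbB, hbA⟩ hadj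
        have haZ : a ∈ Z := by
          rcases haA with h | h
          · exact h
          · exact absurd (Or.inr h) haB
        have hbX : b ∈ X := by
          rcases hbB with h | h
          · exact h
          · exact absurd (Or.inr h) hbA
        have : a ∈ Y := (hadjX b hbX a).mp hadj.symm
        exact hYZ' a this haZ
      · rintro (h | h)
        · exact hXZ' z0 h hz0
        · exact hYZ' z0 h hz0
    have hsubYx : ∀ x ∈ X, ({x} ∪ Y : Set V) ∩ ({x}ᶜ : Set V) = Y := by
      intro x hx
      ext v
      simp only [Set.mem_inter_iff, Set.mem_union, Set.mem_singleton_iff, Set.mem_compl_iff]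
      constructor
      · rintro ⟨h | h, hne⟩
        · exact absurd h hne
        · exact h
      · intro hv
        exact ⟨Or.inr hv, fun h => hXY' x hx (h ▸ hv)⟩
    have hsubY0 : (Z ∪ Y : Set V) ∩ (X ∪ Y) = Y := by
      ext v
      simp only [Set.mem_inter_iff, Set.mem_union]
      constructor
      · rintro ⟨hzy, hxy⟩
        rcases hzy with h | h
        · rcases hxy with h2 | h2
          · exact absurd h (hXZ' v h2)
          · exact h2
        · exact h
      · intro hv
        exact ⟨Or.inr hv, Or.inr hv⟩
    have hindep : IsIndepCollection H C := by
      constructor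
      · rintro p (⟨x, hx, rfl⟩ | hp)
        · exact hsep1 x hx
        · rw [Set.mem_singleton_iff.mp hp]; exact hsep2
      · rintro p hp q hq hpq
        rcases hp with ⟨x, hx, rfl⟩ | hp
        · rcases hq with ⟨x', hx', rfl⟩ | hq
          · have hxx' : x ≠ x' := fun h => hpq (by rw [h])
            constructor
            · rintro v (hv | hv)
              · exact fun h => hxx' ((Set.mem_singleton_iff.mp hv).symm.trans
                  (Set.mem_singleton_iff.mp h))
              · exact fun h => hXY' x' hx' (Set.mem_singleton_iff.mp h ▸ hv)
            · rintro v (hv | hv)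
              · exact fun h => hxx' ((Set.mem_singleton_iff.mp h).symm.trans
                  (Set.mem_singleton_iff.mp hv))
              · exact fun h => hXY' x hx (Set.mem_singleton_iff.mp h ▸ hv)
          · rw [Set.mem_singleton_iff.mp hq]
            constructor
            · rintro v (hv | hv)
              · exact Or.inl (Set.mem_singleton_iff.mp hv ▸ hx)
              · exact Or.inr hv
            · rintro v (hv | hv)
              · exact fun h => hXZ' x hx ((Set.mem_singleton_iff.mp h) ▸ hv)
              · exact fun h => hXY' x hx ((Set.mem_singleton_iff.mp h) ▸ hv)
        · rw [Set.mem_singleton_iff.mp hp]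
          rcases hq with ⟨x, hx, rfl⟩ | hq
          · constructor
            · rintro v (hv | hv)
              · exact fun h => hXZ' x hx ((Set.mem_singleton_iff.mp h) ▸ hv)
              · exact fun h => hXY' x hx ((Set.mem_singleton_iff.mp h) ▸ hv)
            · rintro v (hv | hv)
              · exact Or.inl (Set.mem_singleton_iff.mp hv ▸ hx)
              · exact Or.inr hv
          · exact absurd ((Set.mem_singleton_iff.mp hp).trans
              (Set.mem_singleton_iff.mp hq).symm) hpq
    have horder : ∀ p ∈ C, (p.1 ∩ p.2).ncard ≤ d := by
      rintro p (⟨x, hx, rfl⟩ | hp)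
      · simp only [hf]
        rw [hsubYx x hx, hYcard]
      · rw [Set.mem_singleton_iff.mp hp]
        simp only [hq0]
        rw [hsubY0, hYcard]
    have hmemflap : X.ncard + 1 ∈ {n | ∃ C : Set (Set V × Set V), IsIndepCollection H C ∧
        (∀ p ∈ C, (p.1 ∩ p.2).ncard ≤ d) ∧ C.ncard = n} :=
      ⟨C, hindep, horder, hCcard⟩
    apply le_csSup _ hmemflap
    refine ⟨(Set.univ : Set (Set V × Set V)).ncard, ?_⟩
    rintro n ⟨D, -, -, rfl⟩
    exact Set.ncard_le_ncard (Set.subset_univ D) (Set.toFinite _)
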